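/- Let P_k (k > 0) be the partial order on {0,…,2k+1} generated by the relations 2i ≤ 2i+2 for i < k and 2i ≤ 2i+1 for i ≤ k, let P_0 be the partial order on ℕ generated by 2i ≤ 2i+2 for all i and 2j ≤ 2j−1 for all j > 0, and let P̃_k be P_k together with infinitely many elements pairwise incomparable and incomparable to P_k (on domain ℕ). The family 𝔓 = {P̃_k : k ∈ ℕ} is Ex-learnable and E_range-learnable, but not nUs-learnable. -/

import Mathlib

/-- A structure on domain ℕ: a binary relation given as a map to `Bool`. -/
abbrev Struc := ℕ → ℕ → Bool

/-- The restrictions of `R` and `R'` to `{0,…,s} × {0,…,s}` agree. -/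
def restrEq (R R' : Struc) (s : ℕ) : Prop :=
  ∀ x ≤ s, ∀ y ≤ s, R x y = R' x y

/-- `R` and `R'` are isomorphic structures. -/
def Isom (R R' : Struc) : Prop :=
  ∃ e : ℕ ≃ ℕ, ∀ x y, R' (e x) (e y) = R x y

/-- `R↾s` embeds into `R'`: there is a map injective on `{0,…,s}` preserving the relation. -/
def EmbedsRestr (R : Struc) (s : ℕ) (R' : Struc) : Prop :=
  ∃ h : ℕ → ℕ, (∀ x ≤ s, ∀ y ≤ s, h x = h y → x = y) ∧
    (∀ x ≤ s, ∀ y ≤ s, R' (h x) (h y) = R x y)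

/-- The learning domain of a family: all isomorphic copies of members of the family. -/
def LD {I : Type} (A : I → Struc) : Set Struc := {R | ∃ i, Isom R (A i)}

/-- A learner: its conjecture at stage `s` depends only on `R↾s`. -/
def IsLearner {I : Type} (M : Struc → ℕ → Option I) : Prop :=
  ∀ R R' s, restrEq R R' s → M R s = M R' s

/-- `M` Ex-learns the family `A`. -/
def ExLearns {I : Type} (A : I → Struc) (M : Struc → ℕ → Option I) : Prop :=
  ∀ R i, Isom R (A i) → ∃ s₀, ∀ s ≥ s₀, M R s = some i

/-- `M` Fin-learns the family `A`. -/
def FinLearns {I : Type} (A : I → Struc) (M : Struc → ℕ → Option I) : Prop :=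
  ∀ R i, Isom R (A i) →
    ∃ s₀, (∀ s < s₀, M R s = none) ∧ (∀ s ≥ s₀, M R s = some i)

/-- `M` co-learns the family `A`. -/
def CoLearns {I : Type} (A : I → Struc) (M : Struc → ℕ → Option I) : Prop :=
  ∀ R i, Isom R (A i) → ∀ j, (∃ s, M R s = some j) ↔ j ≠ i

/-- `M` nUs-learns the family `A`: it Ex-learns it and never abandons the correct conjecture. -/
def NUsLearns {I : Type} (A : I → Struc) (M : Struc → ℕ → Option I) : Prop :=
  ExLearns A M ∧
    ∀ R i, Isom R (A i) → ∀ s, M R s = some i → ∀ t ≥ s, M R t = some i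

/-- `M` Dec-learns the family `A`: it Ex-learns it and never repeats an abandoned conjecture. -/
def DecLearns {I : Type} (A : I → Struc) (M : Struc → ℕ → Option I) : Prop :=
  ExLearns A M ∧
    ∀ R ∈ LD A, ∀ (j : I) (s : ℕ), M R s = some j → M R (s + 1) ≠ some j →
      ∀ t > s, M R t ≠ some j

/-- `M` PL-learns the family `A`: the unique conjecture output infinitely often is correct. -/
def PLLearns {I : Type} (A : I → Struc) (M : Struc → ℕ → Option I) : Prop :=
  ∀ R ∈ LD A, ∀ i, {s | M R s = some i}.Infinite ↔ Isom R (A i)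

/-- The relation `E₀` on Baire space: eventual agreement. -/
def E0 (p q : ℕ → ℕ) : Prop := ∃ m, ∀ n ≥ m, p n = q n

/-- The relation `E₃` on `ℕ → (ℕ → ℕ)`: columnwise `E₀`. -/
def E3 (p q : ℕ → ℕ → ℕ) : Prop := ∀ m, E0 (p m) (q m)

/-- The relation `E_range` on Baire space: equality of ranges. -/
def Erange (p q : ℕ → ℕ) : Prop := Set.range p = Set.range q

/-- `P̃_0`: the partial order `P_0` (generated on ℕ by `2i ≤ 2i+2` for all `i` and
`2j ≤ 2j−1` for `j > 0`), realized on the even numbers, together with infinitely many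
incomparable elements (the odd numbers). In `P_0`, `a ≤ b` iff `a = b`, or `a, b` are both
even and `a ≤ b`, or `a` is even, `b` is odd and `a ≤ b + 1`. -/
def tildeP0 : Struc := fun x y =>
  decide (x = y ∨ (x % 2 = 0 ∧ y % 2 = 0 ∧
    (x / 2 = y / 2 ∨
     ((x / 2) % 2 = 0 ∧ (y / 2) % 2 = 0 ∧ x / 2 ≤ y / 2) ∨
     ((x / 2) % 2 = 0 ∧ (y / 2) % 2 = 1 ∧ x / 2 ≤ y / 2 + 1))))

/-- `P̃_k` for `k > 0`: the partial order `P_k` on `{0,…,2k+1}` (generated by `2i ≤ 2i+2`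
for `i < k` and `2i ≤ 2i+1` for `i ≤ k`; its reflexive-transitive closure is
`x ≤ y` iff `x = y` or `x` is even and `x ≤ y ≤ 2k+1`), together with infinitely many
incomparable elements. -/
def tildePk (k : ℕ) : Struc := fun x y =>
  decide (x = y ∨ (x % 2 = 0 ∧ x ≤ y ∧ y ≤ 2 * k + 1))

/-- The family `𝔓 = {P̃_k : k ∈ ℕ}`. -/
def Pfamily : ℕ → Struc
  | 0 => tildeP0
  | k + 1 => tildePk (k + 1)

lemma tildePk_iff (K x y : ℕ) : tildePk K x y = true ↔ (x = y ∨ (x % 2 = 0 ∧ x ≤ y ∧ y ≤ 2*K+1)) := by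
  simp [tildePk]

lemma tildeP0_iff (x y : ℕ) : tildeP0 x y = true ↔ (x = y ∨ (x % 2 = 0 ∧ y % 2 = 0 ∧
    (x / 2 = y / 2 ∨
     ((x / 2) % 2 = 0 ∧ (y / 2) % 2 = 0 ∧ x / 2 ≤ y / 2) ∨
     ((x / 2) % 2 = 0 ∧ (y / 2) % 2 = 1 ∧ x / 2 ≤ y / 2 + 1)))) := by
  simp [tildeP0]

lemma Isom_refl (R : Struc) : Isom R R := ⟨Equiv.refl ℕ, fun _ _ => rfl⟩

lemma Isom_symm {R R' : Struc} (h : Isom R R') : Isom R' R := by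
  obtain ⟨e, he⟩ := h
  exact ⟨e.symm, fun x y => by
    have := he (e.symm x) (e.symm y)
    simp at this; exact this.symm⟩

lemma Isom_trans {R R' R'' : Struc} (h : Isom R R') (h' : Isom R' R'') : Isom R R'' := by
  obtain ⟨e, he⟩ := h; obtain ⟨f, hf⟩ := h'
  exact ⟨e.trans f, fun x y => by simp [Equiv.trans_apply, hf, he]⟩

lemma restrEq_mono {R R' : Struc} {s t : ℕ} (h : restrEq R R' t) (hst : s ≤ t) : restrEq R R' s :=
  fun x hx y hy => h x (hx.trans hst) y (hy.trans hst)

lemma restrEq_symm {R R' : Struc} {s : ℕ} (h : restrEq R R' s) : restrEq R' R s :=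
  fun x hx y hy => (h x hx y hy).symm

lemma Pfamily_pos {k : ℕ} (hk : 1 ≤ k) : Pfamily k = tildePk k := by
  cases k with
  | zero => omega
  | succ n => rfl

/-- forward permutation sending a copy pattern of `tildeP0` on `{0..K}` into `tildePk K`. -/
def gfun (K x : ℕ) : ℕ :=
  if x % 2 = 1 then 2*K+1+x
  else if x ≤ 4*K then (if x % 4 = 0 then x/2 else x/2 + 2)
  else (if x = 4*K+2 then 1 else x - (2*K+1))

def hfun (K y : ℕ) : ℕ :=
  if y = 1 then 4*K+2
  else if y ≤ 2*K+1 then (if y % 2 = 0 then 2*y else 2*y - 4)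
  else (if y % 2 = 0 then y - (2*K+1) else y + (2*K+1))

lemma hg (K : ℕ) (hK : 1 ≤ K) : ∀ x, hfun K (gfun K x) = x := by
  intro x; unfold gfun hfun; split_ifs <;> omega

lemma gh (K : ℕ) (hK : 1 ≤ K) : ∀ y, gfun K (hfun K y) = y := by
  intro y; unfold gfun hfun; split_ifs <;> omega

noncomputable def gEquiv (K : ℕ) (hK : 1 ≤ K) : ℕ ≃ ℕ :=
  ⟨gfun K, hfun K, hg K hK, gh K hK⟩

lemma step2_restr (K : ℕ) (hK : 1 ≤ K) :
    ∀ x ≤ K, ∀ y ≤ K, tildeP0 x y = tildePk K (gfun K x) (gfun K y) := by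
  intro x hx y hy
  have h1 : tildePk K (gfun K x) (gfun K y) = true ↔ tildeP0 x y = true := by
    rw [tildePk_iff, tildeP0_iff]
    unfold gfun
    split_ifs <;> omega
  rcases Bool.eq_false_or_eq_true (tildeP0 x y) with h | h <;>
    rcases Bool.eq_false_or_eq_true (tildePk K (gfun K x) (gfun K y)) with h' | h' <;>
      simp_all

/-- permutation embedding `tildePk K` restricted to `{0..B}` into `tildeP0`. -/
def ufun (K B z : ℕ) : ℕ :=
  if z ≤ 2*K+1 then (if z % 2 = 0 then 2*z+4 else 2*z)
  else if z ≤ B then 2*z - (4*K+3)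
  else if z = B+1 then 0
  else if (z - B) % 2 = 0 then 4*K+4+(z-B) else z + B - (4*K+4)

def vfun (K B w : ℕ) : ℕ :=
  if w % 2 = 1 then (if w ≤ 2*B-(4*K+3) then (w + 4*K+3)/2 else w + (4*K+4) - B)
  else if w = 0 then B+1
  else if w ≤ 4*K+4 then (if w % 4 = 0 then (w-4)/2 else w/2)
  else w + B - (4*K+4)

lemma vu (K B : ℕ) (hB : 2*K+2 ≤ B) : ∀ z, vfun K B (ufun K B z) = z := by
  intro z; unfold ufun; split_ifs with h1 h2 h3 h4 h5 <;> (unfold vfun; split_ifs <;> first | exact absurd ‹False› (fun h => h) | omega)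

lemma uv (K B : ℕ) (hB : 2*K+2 ≤ B) : ∀ w, ufun K B (vfun K B w) = w := by
  intro w; unfold vfun; split_ifs with h1 h2 h3 h4 h5 <;> (unfold ufun; split_ifs <;> first | exact absurd ‹False› (fun h => h) | omega)

noncomputable def uEquiv (K B : ℕ) (hB : 2*K+2 ≤ B) : ℕ ≃ ℕ :=
  ⟨ufun K B, vfun K B, vu K B hB, uv K B hB⟩

lemma step4_restr (K B : ℕ) (hB : 2*K+2 ≤ B) :
    ∀ z ≤ B, ∀ w ≤ B, tildePk K z w = tildeP0 (ufun K B z) (ufun K B w) := by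
  intro z hz w hw
  have h1 : tildeP0 (ufun K B z) (ufun K B w) = true ↔ tildePk K z w = true := by
    rw [tildePk_iff, tildeP0_iff]
    unfold ufun
    split_ifs <;> omega
  rcases Bool.eq_false_or_eq_true (tildePk K z w) with h | h <;>
    rcases Bool.eq_false_or_eq_true (tildeP0 (ufun K B z) (ufun K B w)) with h' | h' <;>
      simp_all

lemma not_nus : ¬ ∃ M : Struc → ℕ → Option ℕ, IsLearner M ∧ NUsLearns Pfamily M := by
  rintro ⟨M, hL, hEx, hU⟩
  obtain ⟨s₀, hs₀⟩ := hEx tildeP0 0 (Isom_refl _)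
  set K := max s₀ 1 with hKdef
  have hK : 1 ≤ K := le_max_right _ _
  have hs : M tildeP0 K = some 0 := hs₀ K (le_max_left _ _)
  set R' : Struc := fun x y => tildePk K (gfun K x) (gfun K y) with hR'
  have hIso' : Isom R' (Pfamily K) := by
    rw [Pfamily_pos hK]; exact ⟨gEquiv K hK, fun x y => rfl⟩
  have hre : restrEq tildeP0 R' K := fun x hx y hy => step2_restr K hK x hx y hy
  obtain ⟨s₁, hs₁⟩ := hEx R' K hIso'
  set T := max s₁ K with hTdef
  have hKT : K ≤ T := le_max_right _ _
  have hT : M R' T = some K := hs₁ T (le_max_left _ _)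
  set B := 2*K+2+T with hBdef
  have hB : 2*K+2 ≤ B := by omega
  set R'' : Struc := fun x y => tildeP0 (ufun K B (gfun K x)) (ufun K B (gfun K y)) with hR''
  have hIso'' : Isom R'' (Pfamily 0) :=
    ⟨(gEquiv K hK).trans (uEquiv K B hB), fun x y => rfl⟩
  have hre2 : restrEq R' R'' T := by
    intro x hx y hy
    have hgx : gfun K x ≤ B := by unfold gfun; split_ifs <;> omega
    have hgy : gfun K y ≤ B := by unfold gfun; split_ifs <;> omega
    exact step4_restr K B hB _ hgx _ hgy
  have hre3 : restrEq tildeP0 R'' K :=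
    fun x hx y hy => (hre x hx y hy).trans (restrEq_mono hre2 hKT x hx y hy)
  have e0 : M R'' K = some 0 := (hL R'' tildeP0 K (restrEq_symm hre3)).trans hs
  have eT : M R'' T = some K := (hL R'' R' T (restrEq_symm hre2)).trans hT
  have := hU R'' 0 hIso'' K e0 T hKT
  rw [eT] at this
  have : K = 0 := Option.some.inj this
  omega

/-- "There is a maximal element with exactly one strict predecessor." -/
def Acond (R : Struc) (s : ℕ) : Prop :=
  ∃ x ≤ s, (∃ y ≤ s, y ≠ x ∧ R y x = true ∧ ∀ z ≤ s, z ≠ x → R z x = true → z = y) ∧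
    ∀ y ≤ s, y ≠ x → R x y = false

open Classical in
/-- the non-isolated points of `R↾s`. -/
noncomputable def nIso (R : Struc) (s : ℕ) : Finset ℕ :=
  (Finset.range (s+1)).filter
    (fun x => ∃ y ∈ Finset.range (s+1), y ≠ x ∧ (R x y = true ∨ R y x = true))

open Classical in
noncomputable def Mlearner : Struc → ℕ → Option ℕ :=
  fun R s => if Acond R s then some ((nIso R s).card / 2 - 1) else some 0

lemma Acond_congr {R R' : Struc} {s : ℕ} (h : restrEq R R' s) (hA : Acond R s) : Acond R' s := by
  obtain ⟨x, hx, ⟨y, hy, hyx, hR, huniq⟩, hmax⟩ := hA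
  exact ⟨x, hx, ⟨y, hy, hyx, (h y hy x hx).symm.trans hR,
      fun z hz hzx hzR => huniq z hz hzx ((h z hz x hx).trans hzR)⟩,
    fun y hy hyx => (h x hx y hy).symm.trans (hmax y hy hyx)⟩

lemma nIso_congr {R R' : Struc} {s : ℕ} (h : restrEq R R' s) : nIso R s = nIso R' s := by
  ext a
  simp only [nIso, Finset.mem_filter, Finset.mem_range]
  constructor <;> rintro ⟨ha, y, hy, hyx, hor⟩ <;> refine ⟨ha, y, hy, hyx, ?_⟩ <;>
    [(rw [← h a (by omega) y (by omega), ← h y (by omega) a (by omega)]; exact hor);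
     (rw [h a (by omega) y (by omega), h y (by omega) a (by omega)]; exact hor)]

lemma Mlearner_isLearner : IsLearner Mlearner := by
  intro R R' s h
  unfold Mlearner
  have hA : Acond R s ↔ Acond R' s := ⟨Acond_congr h, Acond_congr (restrEq_symm h)⟩
  rw [nIso_congr h]
  by_cases hc : Acond R s
  · rw [if_pos hc, if_pos (hA.mp hc)]
  · rw [if_neg hc, if_neg (fun hc' => hc (hA.mpr hc'))]

lemma Mlearner_ex0 (R : Struc) (e : ℕ ≃ ℕ) (he : ∀ x y, tildeP0 (e x) (e y) = R x y) :
    ∀ s ≥ max (e.symm 0) (max (e.symm 2) (e.symm 4)), Mlearner R s = some 0 := by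
  intro s hs
  have key : ∀ a b, R a b = true ↔ ((e a) = (e b) ∨ ((e a) % 2 = 0 ∧ (e b) % 2 = 0 ∧
      ((e a) / 2 = (e b) / 2 ∨
       (((e a) / 2) % 2 = 0 ∧ ((e b) / 2) % 2 = 0 ∧ (e a) / 2 ≤ (e b) / 2 ∨
       (((e a) / 2) % 2 = 0 ∧ ((e b) / 2) % 2 = 1 ∧ (e a) / 2 ≤ (e b) / 2 + 1))))) := by
    intro a b
    rw [← he a b, tildeP0_iff]
  unfold Mlearner
  rw [if_neg]
  rintro ⟨x, hx, ⟨y, hy, hyx, hR, huniq⟩, hmax⟩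
  have hp0 : e.symm 0 ≤ s := le_trans (le_max_left _ _) hs
  have hp2 : e.symm 2 ≤ s := le_trans (le_trans (le_max_left _ _) (le_max_right _ _)) hs
  have hp4 : e.symm 4 ≤ s := le_trans (le_trans (le_max_right _ _) (le_max_right _ _)) hs
  have e0 : e (e.symm 0) = 0 := e.apply_symm_apply 0
  have e2 : e (e.symm 2) = 2 := e.apply_symm_apply 2
  have e4 : e (e.symm 4) = 4 := e.apply_symm_apply 4
  set m := e x with hm
  by_cases h1 : m % 2 = 1
  · -- x is isolated, cannot have a predecessor
    have := (key y x).mp hR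
    have : e y = m := by omega
    exact hyx (e.injective this)
  · by_cases h2 : m = 0
    · have := (key y x).mp hR
      have : e y = m := by omega
      exact hyx (e.injective this)
    · by_cases h3 : m = 4
      · -- x has a strict successor, namely e.symm 2
        have hne : e.symm 2 ≠ x := fun hc => by rw [hc, ← hm] at e2; omega
        have : R x (e.symm 2) = true := (key x (e.symm 2)).mpr (by rw [e2]; omega)
        rw [hmax (e.symm 2) hp2 hne] at this
        exact Bool.false_ne_true this
      · -- x has at least two strict predecessors, e.symm 0 and e.symm 4
        have hne0 : e.symm 0 ≠ x := fun hc => by rw [hc, ← hm] at e0; omega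
        have hne4 : e.symm 4 ≠ x := fun hc => by rw [hc, ← hm] at e4; omega
        have h0 : R (e.symm 0) x = true := (key (e.symm 0) x).mpr (by rw [e0]; omega)
        have h4 : R (e.symm 4) x = true := (key (e.symm 4) x).mpr (by rw [e4]; omega)
        have := (huniq _ hp0 hne0 h0).trans (huniq _ hp4 hne4 h4).symm
        have := congrArg e this
        rw [e0, e4] at this
        omega

lemma Mlearner_exk (K : ℕ) (hK : 1 ≤ K) (R : Struc) (e : ℕ ≃ ℕ)
    (he : ∀ x y, tildePk K (e x) (e y) = R x y) :
    ∀ s ≥ (Finset.range (2*K+2)).sup (fun m => e.symm m), Mlearner R s = some K := by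
  intro s hs
  have key : ∀ a b, R a b = true ↔
      ((e a) = (e b) ∨ ((e a) % 2 = 0 ∧ (e a) ≤ (e b) ∧ (e b) ≤ 2*K+1)) := by
    intro a b; rw [← he a b, tildePk_iff]
  have hsymm : ∀ m, m ≤ 2*K+1 → e.symm m ≤ s :=
    fun m hm => le_trans (Finset.le_sup (Finset.mem_range.mpr (by omega))) hs
  have hA : Acond R s := by
    refine ⟨e.symm 1, hsymm 1 (by omega), ⟨e.symm 0, hsymm 0 (by omega), ?_, ?_, ?_⟩, ?_⟩
    · intro hc; have := congrArg e hc; simp at this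
    · exact (key (e.symm 0) (e.symm 1)).mpr
        (by rw [e.apply_symm_apply 0, e.apply_symm_apply 1]; omega)
    · intro z hz hzx hzR
      have := (key z (e.symm 1)).mp hzR
      simp only [e.apply_symm_apply] at this
      have h0 : e z = 0 := by
        rcases this with h | h
        · exact absurd (e.symm_apply_apply z ▸ congrArg e.symm h) hzx
        · omega
      have := congrArg e.symm h0
      rwa [e.symm_apply_apply] at this
    · intro y hy hyx
      rw [Bool.eq_false_iff]
      intro hc
      have := (key (e.symm 1) y).mp hc
      simp only [e.apply_symm_apply] at this
      rcases this with h | h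
      · exact hyx (e.symm_apply_apply y ▸ congrArg e.symm h.symm)
      · omega
  have hset : nIso R s = (Finset.range (2*K+2)).image (fun m => e.symm m) := by
    ext a
    simp only [nIso, Finset.mem_filter, Finset.mem_range, Finset.mem_image]
    constructor
    · rintro ⟨ha, y, hy, hyx, hor⟩
      have hea : e a ≤ 2*K+1 := by
        have hne : e a ≠ e y := fun hc => hyx (e.injective hc).symm
        rcases hor with h | h
        · have := (key a y).mp h; omega
        · have := (key y a).mp h; omega
      exact ⟨e a, by omega, e.symm_apply_apply a⟩
    · rintro ⟨m, hm, rfl⟩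
      refine ⟨by have := hsymm m (by omega); omega, ?_⟩
      by_cases hpar : m % 2 = 0
      · refine ⟨e.symm (m+1), by have := hsymm (m+1) (by omega); omega, ?_, ?_⟩
        · intro hc; have := congrArg e hc; simp at this
        · left; exact (key (e.symm m) (e.symm (m+1))).mpr
            (by rw [e.apply_symm_apply m, e.apply_symm_apply (m+1)]; omega)
      · refine ⟨e.symm (m-1), by have := hsymm (m-1) (by omega); omega, ?_, ?_⟩
        · intro hc; have := congrArg e hc; simp at this; omega
        · right; exact (key (e.symm (m-1)) (e.symm m)).mpr
            (by rw [e.apply_symm_apply (m-1), e.apply_symm_apply m]; omega)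
  have hcard : (nIso R s).card = 2*K+2 := by
    rw [hset, Finset.card_image_of_injective _ e.symm.injective, Finset.card_range]
  unfold Mlearner
  rw [if_pos hA, hcard]
  congr 1
  omega

lemma Mlearner_exLearns : ExLearns Pfamily Mlearner := by
  rintro R i ⟨e, he⟩
  cases i with
  | zero => exact ⟨_, Mlearner_ex0 R e he⟩
  | succ k => exact ⟨_, Mlearner_exk (k+1) (by omega) R e he⟩

/-- number of (ordered) comparable pairs of distinct elements in `R↾s`. -/
def dcount (R : Struc) (s : ℕ) : ℕ :=
  (((Finset.range (s+1)) ×ˢ (Finset.range (s+1))).filter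
    (fun p => p.1 ≠ p.2 ∧ R p.1 p.2 = true)).card

def Gam (R : Struc) : ℕ → ℕ := fun n => min (dcount R n.unpair.1) n.unpair.2

lemma restrEq_refl (R : Struc) (s : ℕ) : restrEq R R s := fun _ _ _ _ => rfl

lemma dcount_congr {R R' : Struc} {s : ℕ} (h : restrEq R R' s) : dcount R s = dcount R' s := by
  unfold dcount
  congr 1
  apply Finset.filter_congr
  intro p hp
  rw [Finset.mem_product, Finset.mem_range, Finset.mem_range] at hp
  rw [h p.1 (by omega) p.2 (by omega)]

lemma isOpen_restr (R : Struc) (a : ℕ) : IsOpen {S : Struc | restrEq R S a} := by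
  have hEq : {S : Struc | restrEq R S a} =
      ⋂ (x : Fin (a+1)), ⋂ (y : Fin (a+1)), {S : Struc | R x.1 y.1 = S x.1 y.1} := by
    ext S
    simp only [Set.mem_setOf_eq, Set.mem_iInter, restrEq]
    constructor
    · intro h x y; exact h x.1 (by omega) y.1 (by omega)
    · intro h x hx y hy; exact h ⟨x, by omega⟩ ⟨y, by omega⟩
  rw [hEq]
  refine isOpen_iInter_of_finite fun x => isOpen_iInter_of_finite fun y => ?_
  have hc : Continuous (fun S : Struc => S x.1 y.1) :=
    (continuous_apply y.1).comp (continuous_apply x.1)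
  have : {S : Struc | R x.1 y.1 = S x.1 y.1} = (fun S : Struc => S x.1 y.1) ⁻¹' {R x.1 y.1} := by
    ext S; simp [eq_comm]
  rw [this]
  exact hc.isOpen_preimage _ (isOpen_discrete _)

lemma cont_dcount (a : ℕ) : Continuous (fun R => dcount R a) := by
  apply IsLocallyConstant.continuous
  rw [IsLocallyConstant.iff_exists_open]
  intro R
  exact ⟨{S | restrEq R S a}, isOpen_restr R a, restrEq_refl R a,
    fun S hS => (dcount_congr hS).symm⟩

lemma cont_Gam : Continuous Gam := by
  apply continuous_pi
  intro n
  exact (continuous_of_discreteTopology (f := fun t : ℕ => min t n.unpair.2)).comp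
    (cont_dcount n.unpair.1)

def Dset (R : Struc) : Set ℕ := {m | ∃ s, m ≤ dcount R s}

lemma range_Gam (R : Struc) : Set.range (Gam R) = Dset R := by
  ext m
  constructor
  · rintro ⟨n, rfl⟩; exact ⟨n.unpair.1, min_le_left _ _⟩
  · rintro ⟨s, hm⟩
    refine ⟨Nat.pair s m, ?_⟩
    simp only [Gam, Nat.unpair_pair]
    omega

lemma Dset_iso_le {R R' : Struc} (h : Isom R R') : Dset R ⊆ Dset R' := by
  obtain ⟨e, he⟩ := h
  rintro m ⟨s, hm⟩
  refine ⟨(Finset.range (s+1)).sup e, le_trans hm ?_⟩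
  unfold dcount
  apply Finset.card_le_card_of_injOn (fun p => (e p.1, e p.2))
  · intro p hp
    simp only [Finset.mem_coe, Finset.mem_filter, Finset.mem_product, Finset.mem_range] at hp ⊢
    obtain ⟨⟨h1, h2⟩, hne, hrel⟩ := hp
    have hb1 : e p.1 ≤ (Finset.range (s+1)).sup e :=
      Finset.le_sup (Finset.mem_range.mpr h1)
    have hb2 : e p.2 ≤ (Finset.range (s+1)).sup e :=
      Finset.le_sup (Finset.mem_range.mpr h2)
    refine ⟨⟨by omega, by omega⟩, fun hc => hne (e.injective hc), ?_⟩
    rw [he p.1 p.2]; exact hrel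
  · intro p _ q _ hpq
    simp only [Prod.mk.injEq] at hpq
    exact Prod.ext (e.injective hpq.1) (e.injective hpq.2)

lemma Dset_congr {R R' : Struc} (h : Isom R R') : Dset R = Dset R' :=
  subset_antisymm (Dset_iso_le h) (Dset_iso_le (Isom_symm h))

lemma Dset_P0 : Dset tildeP0 = Set.univ := by
  ext m
  simp only [Set.mem_univ, iff_true, Dset, Set.mem_setOf_eq]
  refine ⟨4*m+4, ?_⟩
  have hsub : (Finset.range m).image (fun b => ((0:ℕ), 4*b+4)) ⊆
      ((Finset.range (4*m+4+1)) ×ˢ (Finset.range (4*m+4+1))).filter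
        (fun p => p.1 ≠ p.2 ∧ tildeP0 p.1 p.2 = true) := by
    intro p hp
    simp only [Finset.mem_image, Finset.mem_range] at hp
    obtain ⟨b, hb, rfl⟩ := hp
    simp only [Finset.mem_filter, Finset.mem_product, Finset.mem_range]
    refine ⟨⟨by omega, by omega⟩, by omega, tildeP0_iff _ _ |>.mpr (by omega)⟩
  have hcard : ((Finset.range m).image (fun b => ((0:ℕ), 4*b+4))).card = m := by
    rw [Finset.card_image_of_injective, Finset.card_range]
    intro a b hab
    simp only [Prod.mk.injEq] at hab
    omega
  calc m = _ := hcard.symm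
    _ ≤ _ := Finset.card_le_card hsub

lemma dcount_Pk_le (K s : ℕ) : dcount (tildePk K) s ≤ dcount (tildePk K) (2*K+1) := by
  apply Finset.card_le_card
  intro p hp
  simp only [Finset.mem_filter, Finset.mem_product, Finset.mem_range] at hp ⊢
  obtain ⟨⟨h1, h2⟩, hne, hrel⟩ := hp
  have := (tildePk_iff K p.1 p.2).mp hrel
  exact ⟨⟨by omega, by omega⟩, hne, hrel⟩

lemma Dset_Pk (K : ℕ) : Dset (tildePk K) = Set.Iic (dcount (tildePk K) (2*K+1)) := by
  ext m
  constructor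
  · rintro ⟨s, hm⟩; exact le_trans hm (dcount_Pk_le K s)
  · intro hm; exact ⟨2*K+1, hm⟩

lemma NK_lt (K : ℕ) : dcount (tildePk K) (2*K+1) < dcount (tildePk (K+1)) (2*(K+1)+1) := by
  apply Finset.card_lt_card
  rw [Finset.ssubset_iff_of_subset]
  · refine ⟨(2*K+2, 2*K+3), ?_, ?_⟩
    · simp only [Finset.mem_filter, Finset.mem_product, Finset.mem_range]
      exact ⟨⟨by omega, by omega⟩, by omega, (tildePk_iff _ _ _).mpr (by omega)⟩
    · intro hc
      simp only [Finset.mem_filter, Finset.mem_product, Finset.mem_range] at hc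
      omega
  · intro p hp
    simp only [Finset.mem_filter, Finset.mem_product, Finset.mem_range] at hp ⊢
    obtain ⟨⟨h1, h2⟩, hne, hrel⟩ := hp
    have := (tildePk_iff K p.1 p.2).mp hrel
    exact ⟨⟨by omega, by omega⟩, hne, (tildePk_iff _ _ _).mpr (by omega)⟩

lemma NK_strictMono : StrictMono (fun K => dcount (tildePk K) (2*K+1)) :=
  strictMono_nat_of_lt_succ (fun K => NK_lt K)

lemma Dset_Pfamily_inj {i j : ℕ} (h : Dset (Pfamily i) = Dset (Pfamily j)) : i = j := by
  match i, j with
  | 0, 0 => rfl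
  | 0, j+1 =>
    rw [show Pfamily 0 = tildeP0 from rfl, show Pfamily (j+1) = tildePk (j+1) from rfl,
      Dset_P0, Dset_Pk] at h
    have := h ▸ Set.mem_univ (dcount (tildePk (j+1)) (2*(j+1)+1) + 1)
    simp [Set.mem_Iic] at this
  | i+1, 0 =>
    rw [show Pfamily 0 = tildeP0 from rfl, show Pfamily (i+1) = tildePk (i+1) from rfl,
      Dset_P0, Dset_Pk] at h
    have := h.symm ▸ Set.mem_univ (dcount (tildePk (i+1)) (2*(i+1)+1) + 1)
    simp [Set.mem_Iic] at this
  | i+1, j+1 =>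
    rw [show Pfamily (i+1) = tildePk (i+1) from rfl, show Pfamily (j+1) = tildePk (j+1) from rfl,
      Dset_Pk, Dset_Pk] at h
    have h2 : dcount (tildePk (i+1)) (2*(i+1)+1) = dcount (tildePk (j+1)) (2*(j+1)+1) := by
      have h1 := h ▸ Set.mem_Iic.mpr (le_refl (dcount (tildePk (i+1)) (2*(i+1)+1)))
      have h1' := h.symm ▸ Set.mem_Iic.mpr (le_refl (dcount (tildePk (j+1)) (2*(j+1)+1)))
      simp only [Set.mem_Iic] at h1 h1'
      omega
    exact NK_strictMono.injective h2

lemma erange_learnable :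
    ∃ Γ : Struc → (ℕ → ℕ), ContinuousOn Γ (LD Pfamily) ∧
      ∀ R ∈ LD Pfamily, ∀ R' ∈ LD Pfamily, (Isom R R' ↔ Erange (Γ R) (Γ R')) := by
  refine ⟨Gam, cont_Gam.continuousOn, ?_⟩
  rintro R ⟨i, hi⟩ R' ⟨j, hj⟩
  constructor
  · intro h
    unfold Erange
    rw [range_Gam, range_Gam]
    exact Dset_congr h
  · intro h
    unfold Erange at h
    rw [range_Gam, range_Gam] at h
    have hij : i = j := Dset_Pfamily_inj ((Dset_congr hi).symm.trans (h.trans (Dset_congr hj)))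
    subst hij
    exact Isom_trans hi (Isom_symm hj)

/-- The family `𝔓` is Ex-learnable and `E_range`-learnable, but not nUs-learnable. -/
theorem Pfamily_ex_erange_not_nus :
    (∃ M : Struc → ℕ → Option ℕ, IsLearner M ∧ ExLearns Pfamily M) ∧
    (∃ Γ : Struc → (ℕ → ℕ), ContinuousOn Γ (LD Pfamily) ∧
        ∀ R ∈ LD Pfamily, ∀ R' ∈ LD Pfamily, (Isom R R' ↔ Erange (Γ R) (Γ R'))) ∧
    ¬ ∃ M : Struc → ℕ → Option ℕ, IsLearner M ∧ NUsLearns Pfamily M := by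
  exact ⟨⟨Mlearner, Mlearner_isLearner, Mlearner_exLearns⟩, erange_learnable, not_nus⟩
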